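/- For every odd positive integer d there exist positive constants s_d, B_d, and C_d such that |ρ_τ^d(θ) − P_d(τ,θ)| ≤ B_d e^{−C_d/τ} for all complex θ with |θ| < s_d and all τ with 0 < τ < 1. -/

import Mathlib

open Filter Metric

open Topology

/-- `P_d(τ,θ)`, defined inductively by `P₁(τ,θ) = (2πτ)^{-1/2} e^{−θ²/(2τ)}` and
`P_{d+2}(τ,θ) = −(e^{dτ/2}/(2π)) (1/sin θ) ∂P_d/∂θ(τ,θ)`.
The index `k` corresponds to the odd dimension `d = 2k+1`. -/
noncomputable def Pd : ℕ → ℝ → ℂ → ℂ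
  | 0 => fun τ θ => (↑(Real.sqrt (2 * Real.pi * τ)) : ℂ)⁻¹ * Complex.exp (-θ ^ 2 / (2 * (τ : ℂ)))
  | k + 1 => fun τ θ =>
      -((↑(Real.exp ((2 * (k : ℝ) + 1) * τ / 2)) : ℂ) / (2 * (Real.pi : ℂ) * Complex.sin θ)) *
        deriv (Pd k τ) θ

/-- The analytically continued heat kernel `ρ_τ^d(θ)` on odd-dimensional spheres:
`ρ_τ^1(θ) = (2πτ)^{-1/2} Σ_{n∈ℤ} e^{−(θ−2πn)²/(2τ)}` and
`ρ_τ^{d+2}(θ) = −(e^{dτ/2}/(2π sin θ)) dρ_τ^d/dθ(θ)`.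
The index `k` corresponds to the odd dimension `d = 2k+1`. -/
noncomputable def rhoS : ℕ → ℝ → ℂ → ℂ
  | 0 => fun τ θ => (↑(Real.sqrt (2 * Real.pi * τ)) : ℂ)⁻¹ *
      ∑' n : ℤ, Complex.exp (-(θ - 2 * (Real.pi : ℂ) * (n : ℂ)) ^ 2 / (2 * (τ : ℂ)))
  | k + 1 => fun τ θ =>
      -((↑(Real.exp ((2 * (k : ℝ) + 1) * τ / 2)) : ℂ) / (2 * (Real.pi : ℂ) * Complex.sin θ)) *
        deriv (rhoS k τ) θ

noncomputable def W : ℝ := ∑' n : ℤ, Real.exp (-(n.natAbs:ℝ))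

lemma summable_w : Summable (fun n : ℤ => Real.exp (-(n.natAbs:ℝ))) := by
  have hg : Summable (fun n : ℕ => Real.exp (-(n:ℝ))) := by
    have : ∀ n : ℕ, Real.exp (-(n:ℝ)) = Real.exp (-1) ^ n := by
      intro n; rw [← Real.exp_nat_mul]; norm_num
    rw [funext this]
    exact summable_geometric_of_lt_one (Real.exp_pos _).le
      (Real.exp_lt_one_iff.2 (by norm_num))
  refine Summable.of_nat_of_neg (by simpa using hg) (by simpa using hg)

lemma W_nonneg : 0 ≤ W := tsum_nonneg (fun n => (Real.exp_pos _).le)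

lemma inv_sqrt_le {τ : ℝ} (hτ : 0 < τ) (hτ1 : τ < 1) :
    (Real.sqrt (2 * Real.pi * τ))⁻¹ ≤ 2 * Real.exp (1/(2*τ)) := by
  have hπ : (3:ℝ) ≤ Real.pi := Real.pi_gt_three.le
  have h1 : Real.sqrt τ ≤ Real.sqrt (2 * Real.pi * τ) := by
    apply Real.sqrt_le_sqrt; nlinarith
  have hr : 0 < Real.sqrt τ := Real.sqrt_pos.2 hτ
  have step : (Real.sqrt τ)⁻¹ ≤ 2 * Real.exp (1/(2*τ)) := by
    set r := Real.sqrt τ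
    set E := Real.exp (1/(2*τ))
    have hE : 0 < E := Real.exp_pos _
    have hr2 : r^2 = τ := Real.sq_sqrt hτ.le
    have hr1 : r ≤ 1 := by
      rw [show (1:ℝ) = Real.sqrt 1 by simp]
      exact Real.sqrt_le_sqrt hτ1.le
    have hτE : 1/2 ≤ τ * E := by
      have h := Real.add_one_le_exp (1/(2*τ))
      have := mul_le_mul_of_nonneg_left h hτ.le
      have heq : τ * (1/(2*τ) + 1) = 1/2 + τ := by field_simp
      rw [heq] at this
      linarith
    rw [inv_le_iff_one_le_mul₀ hr]
    rw [← hr2] at hτE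
    nlinarith [mul_nonneg (sub_nonneg.2 hr1) (mul_nonneg hr.le hE.le)]
  calc (Real.sqrt (2 * Real.pi * τ))⁻¹ ≤ (Real.sqrt τ)⁻¹ := by
        apply inv_anti₀ hr h1
    _ ≤ _ := step

lemma abs_sin_sub_le (θ : ℂ) (h : ‖θ‖ ≤ 1) :
    ‖Complex.sin θ - θ‖ ≤ ‖θ‖ ^ 3 := by
  have h1 : ‖θ * Complex.I‖ ≤ 1 := by simpa using h
  have h2 : ‖-θ * Complex.I‖ ≤ 1 := by simpa using h
  have e1 := Complex.exp_bound h1 (n := 3) (by norm_num)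
  have e2 := Complex.exp_bound h2 (n := 3) (by norm_num)
  have habs1 : ‖θ * Complex.I‖ = ‖θ‖ := by simp
  have habs2 : ‖-θ * Complex.I‖ = ‖θ‖ := by simp
  rw [habs1] at e1; rw [habs2] at e2
  have e1' := e1.trans_eq (show _ = (2/9) * ‖θ‖ ^ 3 by norm_num [Nat.factorial]; ring)
  have e2' := e2.trans_eq (show _ = (2/9) * ‖θ‖ ^ 3 by norm_num [Nat.factorial]; ring)
  have hsin : Complex.sin θ - θ =
      ((Complex.exp (-θ * Complex.I) - ∑ m ∈ Finset.range 3, (-θ*Complex.I)^m / m.factorial)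
        - (Complex.exp (θ * Complex.I) - ∑ m ∈ Finset.range 3, (θ*Complex.I)^m / m.factorial))
        * Complex.I / 2 := by
    simp only [Finset.sum_range_succ, Finset.sum_range_zero, Nat.factorial]
    rw [Complex.sin]
    push_cast
    ring_nf
    rw [Complex.I_sq]
    ring
  rw [hsin]
  rw [norm_div, norm_mul, Complex.norm_I, mul_one, Complex.norm_two]
  have hnn : (0:ℝ) ≤ ‖θ‖ ^ 3 := by positivity
  have := (norm_sub_le _ _).trans (add_le_add e2' e1')
  calc ‖_‖ / 2 ≤ (2/9 * ‖θ‖ ^ 3 + 2/9 * ‖θ‖ ^ 3) / 2 := by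
        apply div_le_div_of_nonneg_right this (by norm_num)
    _ ≤ ‖θ‖ ^ 3 := by nlinarith

lemma abs_sin_lower {θ : ℂ} (h : ‖θ‖ ≤ 1/2) :
    ‖θ‖ / 2 ≤ ‖Complex.sin θ‖ := by
  have h1 := abs_sin_sub_le θ (h.trans (by norm_num))
  have h2 : ‖θ‖ ≤ ‖Complex.sin θ - θ‖ + ‖Complex.sin θ‖ := by
    have h3 := norm_add_le (θ - Complex.sin θ) (Complex.sin θ)
    simp only [sub_add_cancel] at h3
    rw [norm_sub_rev θ (Complex.sin θ)] at h3
    linarith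
  have hx := norm_nonneg θ
  have hsq : ‖θ‖ ^ 2 ≤ 1/4 := by nlinarith
  have h4 : ‖θ‖ ^ 3 ≤ ‖θ‖ / 4 := by nlinarith
  linarith

lemma sin_ne_zero_small {θ : ℂ} (h : ‖θ‖ ≤ 1/2) (h0 : θ ≠ 0) :
    Complex.sin θ ≠ 0 := by
  have h1 := abs_sin_lower h
  have h2 : 0 < ‖θ‖ := by simpa [norm_pos_iff] using h0
  have : 0 < ‖Complex.sin θ‖ := by linarith
  simpa [norm_pos_iff] using this

noncomputable def bnd (τ : ℝ) (n : ℤ) : ℝ := Real.exp ((1/4 - 32 * (n:ℝ)^2) / (2*τ))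

lemma bnd_neg (τ : ℝ) (n : ℤ) : bnd τ (-n) = bnd τ n := by simp [bnd]

lemma summable_bnd {τ : ℝ} (hτ : 0 < τ) : Summable (bnd τ) := by
  have hnn : ∀ n : ℕ, (n:ℝ) ≤ (n:ℝ)^2 := by
    intro n
    rcases Nat.eq_zero_or_pos n with rfl | hp
    · simp
    · have : (1:ℝ) ≤ n := by exact_mod_cast hp
      nlinarith
  have key : ∀ n : ℕ, bnd τ n ≤ Real.exp (1/(8*τ)) * Real.exp (-16/τ) ^ n := by
    intro n
    rw [← Real.exp_nat_mul, ← Real.exp_add, bnd, Real.exp_le_exp]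
    rw [div_le_iff₀ (by positivity)]
    field_simp
    push_cast
    nlinarith [hnn n, mul_pos hτ hτ]
  have hgeo : Summable (fun n : ℕ => Real.exp (1/(8*τ)) * Real.exp (-16/τ) ^ n) := by
    apply Summable.mul_left
    refine summable_geometric_of_lt_one (Real.exp_pos _).le (Real.exp_lt_one_iff.2 ?_)
    exact div_neg_of_neg_of_pos (by norm_num) hτ
  have hNat : Summable (fun n : ℕ => bnd τ n) :=
    Summable.of_nonneg_of_le (fun n => (Real.exp_pos _).le) key hgeo
  refine Summable.of_nat_of_neg hNat ?_
  simpa only [bnd_neg] using hNat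

-- τ-free comparison for n ≠ 0
lemma bnd_le {τ : ℝ} (hτ : 0 < τ) (hτ1 : τ < 1) {n : ℤ} (hn : n ≠ 0) :
    bnd τ n ≤ Real.exp (-14/τ) * Real.exp (-(n.natAbs:ℝ)) := by
  rw [bnd, ← Real.exp_add, Real.exp_le_exp]
  have hN : (1:ℝ) ≤ (n.natAbs:ℝ) := by
    have := Int.one_le_abs hn
    rw [Int.abs_eq_natAbs] at this
    exact_mod_cast this
  have hsq : ((n:ℝ))^2 = ((n.natAbs:ℝ))^2 := by
    rw [Nat.cast_natAbs (α := ℝ), Int.cast_abs, sq_abs]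
  rw [hsq, div_le_iff₀ (by positivity)]
  set N := (n.natAbs:ℝ)
  have : (-14/τ + -N) * (2*τ) = -28 - 2*N*τ := by field_simp; ring
  rw [this]
  nlinarith [mul_pos hτ hτ, hN, hτ1]


private lemma quad_aux {a m : ℝ} (ha1 : -(1/2) ≤ a) (ha2 : a ≤ 1/2) (hm : 1 ≤ m) :
    32*m^2 ≤ (a - 2*Real.pi*m)^2 := by
  have hπ : 3.14 ≤ Real.pi := by have := Real.pi_gt_d6; linarith
  have k1 : (6.28:ℝ)*m - 1/2 ≤ 2*Real.pi*m - a := by nlinarith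
  have k0 : (0:ℝ) ≤ 6.28*m - 1/2 := by nlinarith
  have k2 : ((6.28:ℝ)*m - 1/2)^2 ≤ (2*Real.pi*m - a)^2 := by nlinarith
  nlinarith [sq_nonneg m]

lemma term_re_bound {τ : ℝ} (hτ : 0 < τ) (n : ℤ) (θ : ℂ) (hθ : ‖θ‖ < 1/2) :
    ‖Complex.exp (-(θ - 2*(Real.pi:ℂ)*(n:ℂ))^2 / (2*(τ:ℂ)))‖ ≤ bnd τ n := by
  rw [Complex.norm_exp, bnd, Real.exp_le_exp]
  have h2 : (2*(τ:ℂ)) = ((2*τ:ℝ):ℂ) := by push_cast; ring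
  rw [h2, Complex.div_ofReal_re]
  apply div_le_div_of_nonneg_right ?_ (by linarith) |>.trans_eq rfl
  set a := θ.re; set b := θ.im
  have hre : (-(θ - 2*(Real.pi:ℂ)*(n:ℂ))^2).re = -((a - 2*Real.pi*n)^2 - b^2) := by
    simp [Complex.ext_iff, a, b, pow_two, Complex.mul_re, Complex.mul_im, Complex.sub_re, Complex.sub_im]
  rw [hre]
  have ha : |a| ≤ ‖θ‖ := Complex.abs_re_le_norm θ
  have hb : |b| ≤ ‖θ‖ := Complex.abs_im_le_norm θ
  have ha1 := (abs_le.1 (ha.trans hθ.le)).1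
  have ha2 := (abs_le.1 (ha.trans hθ.le)).2
  have hb2 : b^2 ≤ 1/4 := by
    have := abs_le.1 (hb.trans hθ.le); nlinarith [this.1, this.2]
  rcases eq_or_ne n 0 with rfl | hn
  · push_cast; nlinarith [sq_nonneg a]
  · have hm : 1 ≤ |(n:ℝ)| := by
      rw [← Int.cast_abs]; exact_mod_cast Int.one_le_abs hn
    set m := (n:ℝ) with hmdef
    have key : 32*m^2 ≤ (a - 2*Real.pi*m)^2 := by
      rcases abs_cases m with ⟨he, _⟩ | ⟨he, _⟩
      · exact quad_aux ha1 ha2 (he ▸ hm)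
      · have : (a - 2*Real.pi*m)^2 = ((-a) - 2*Real.pi*(-m))^2 := by ring
        rw [this]
        have : 32*m^2 = 32*(-m)^2 := by ring
        rw [this]
        exact quad_aux (by linarith) (by linarith) (he ▸ hm)
    linarith
lemma Pd_zero_diff {τ : ℝ} : Differentiable ℂ (Pd 0 τ) := by
  simp only [Pd]
  apply Differentiable.const_mul
  apply Differentiable.cexp
  exact ((differentiable_id.pow 2).neg).div_const _

lemma base_case {τ : ℝ} (hτ : 0 < τ) (hτ1 : τ < 1) :
    ∃ G : ℂ → ℂ,
      DifferentiableOn ℂ G (ball (0:ℂ) (1/2)) ∧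
      (∀ θ ∈ ball (0:ℂ) (1/2), G (-θ) = G θ) ∧
      (∀ θ ∈ ball (0:ℂ) (1/2), ‖G θ‖ ≤ (2*W+2) * Real.exp (-13 / τ)) ∧
      (∀ θ ∈ ball (0:ℂ) (1/2), rhoS 0 τ θ - Pd 0 τ θ = G θ) ∧
      (∀ θ : ℂ, DifferentiableAt ℂ (Pd 0 τ) θ) := by
  set c : ℂ := (↑(Real.sqrt (2 * Real.pi * τ)) : ℂ)⁻¹ with hc
  set f : ℤ → ℂ → ℂ := fun n θ => Complex.exp (-(θ - 2 * (Real.pi : ℂ) * (n : ℂ)) ^ 2 / (2 * (τ : ℂ))) with hf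
  refine ⟨fun θ => rhoS 0 τ θ - Pd 0 τ θ, ?_, ?_, ?_, fun θ _ => rfl, fun θ => Pd_zero_diff θ⟩
  · -- differentiability
    have hdiff_f : ∀ n : ℤ, Differentiable ℂ (f n) := by
      intro n
      apply Differentiable.cexp
      apply Differentiable.div_const
      exact ((differentiable_id.sub (differentiable_const _)).pow 2).neg
    have htsum : DifferentiableOn ℂ (fun θ : ℂ => ∑' n : ℤ, f n θ) (ball (0:ℂ) (1/2)) := by
      apply Complex.differentiableOn_tsum_of_summable_norm (summable_bnd hτ)
        (fun n => (hdiff_f n).differentiableOn) isOpen_ball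
      intro n w hw
      rw [mem_ball_zero_iff] at hw
      exact term_re_bound hτ n w hw
    have h1 : DifferentiableOn ℂ (rhoS 0 τ) (ball (0:ℂ) (1/2)) := by
      simp only [rhoS]
      exact htsum.const_mul c
    exact h1.sub Pd_zero_diff.differentiableOn
  · -- evenness
    intro θ _
    show rhoS 0 τ (-θ) - Pd 0 τ (-θ) = rhoS 0 τ θ - Pd 0 τ θ
    have h1 : rhoS 0 τ (-θ) = rhoS 0 τ θ := by
      simp only [rhoS]
      congr 1
      rw [← (Equiv.neg ℤ).tsum_eq (fun n : ℤ => f n θ)]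
      apply tsum_congr
      intro n
      simp only [f, Equiv.neg_apply]
      congr 1
      push_cast
      ring
    have h2 : Pd 0 τ (-θ) = Pd 0 τ θ := by
      simp only [Pd]
      congr 2
      ring
    rw [h1, h2]
  · -- bound
    intro θ hθ
    rw [mem_ball_zero_iff] at hθ
    have hsum : Summable (fun n : ℤ => f n θ) := by
      apply Summable.of_norm_bounded (summable_bnd hτ)
      intro n
      exact term_re_bound hτ n θ hθ
    have hzero : f 0 θ = Complex.exp (-θ ^ 2 / (2 * (τ : ℂ))) := by
      simp only [f]
      congr 2
      push_cast
      ring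
    have hsplit : rhoS 0 τ θ - Pd 0 τ θ = c * ∑' n : ℤ, ite (n = 0) 0 (f n θ) := by
      simp only [rhoS, Pd, ← hc]
      rw [hsum.tsum_eq_add_tsum_ite 0, hzero]
      ring
    show ‖rhoS 0 τ θ - Pd 0 τ θ‖ ≤ (2*W+2) * Real.exp (-13 / τ)
    rw [hsplit]
    have hnorm_ite : ∀ n : ℤ, ‖ite (n = 0) (0:ℂ) (f n θ)‖ ≤
        Real.exp (-14/τ) * Real.exp (-(n.natAbs:ℝ)) := by
      intro n
      rcases eq_or_ne n 0 with rfl | hn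
      · simp
        positivity
      · rw [if_neg hn]
        exact le_trans (term_re_bound hτ n θ hθ) (bnd_le hτ hτ1 hn)
    have hsummW := summable_w.mul_left (Real.exp (-14/τ))
    have hsumite : Summable (fun n : ℤ => ‖ite (n = 0) (0:ℂ) (f n θ)‖) :=
      Summable.of_nonneg_of_le (fun n => norm_nonneg _) hnorm_ite hsummW
    have h1 : ‖∑' n : ℤ, ite (n = 0) (0:ℂ) (f n θ)‖ ≤ Real.exp (-14/τ) * W := by
      calc ‖∑' n : ℤ, ite (n = 0) (0:ℂ) (f n θ)‖
          ≤ ∑' n : ℤ, ‖ite (n = 0) (0:ℂ) (f n θ)‖ := norm_tsum_le_tsum_norm hsumite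
        _ ≤ ∑' n : ℤ, Real.exp (-14/τ) * Real.exp (-(n.natAbs:ℝ)) :=
            Summable.tsum_le_tsum hnorm_ite hsumite hsummW
        _ = Real.exp (-14/τ) * W := by rw [W, tsum_mul_left]
    have hcabs : ‖c‖ ≤ 2 * Real.exp (1/(2*τ)) := by
      rw [hc, norm_inv, Complex.norm_real, Real.norm_eq_abs, abs_of_nonneg (Real.sqrt_nonneg _)]
      exact inv_sqrt_le hτ hτ1
    rw [norm_mul]
    calc ‖c‖ * ‖∑' n : ℤ, ite (n = 0) (0:ℂ) (f n θ)‖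
        ≤ (2 * Real.exp (1/(2*τ))) * (Real.exp (-14/τ) * W) := by
          apply mul_le_mul hcabs ?_ (norm_nonneg _) (by positivity)
          exact h1
      _ = 2*W * Real.exp (1/(2*τ) + -14/τ) := by rw [Real.exp_add]; ring
      _ ≤ (2*W+2) * Real.exp (-13/τ) := by
          apply mul_le_mul (by linarith [W_nonneg]) ?_ (Real.exp_pos _).le (by linarith [W_nonneg])
          rw [Real.exp_le_exp]
          have heq : 1/(2*τ) + -14/τ = (1/2 - 14)/τ := by field_simp; ring
          rw [heq, div_le_div_iff_of_pos_right hτ]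
          norm_num

def HMInv (k : ℕ) (s B C : ℝ) : Prop :=
  ∀ τ : ℝ, 0 < τ → τ < 1 → ∃ G : ℂ → ℂ,
    DifferentiableOn ℂ G (ball (0:ℂ) s) ∧
    (∀ θ ∈ ball (0:ℂ) s, G (-θ) = G θ) ∧
    (∀ θ ∈ ball (0:ℂ) s, ‖G θ‖ ≤ B * Real.exp (-C / τ)) ∧
    (∀ θ ∈ ball (0:ℂ) s, θ ≠ 0 → rhoS k τ θ - Pd k τ θ = G θ) ∧
    ‖rhoS k τ 0 - Pd k τ 0‖ ≤ B * Real.exp (-C / τ) ∧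
    (∀ θ ∈ ball (0:ℂ) s, θ ≠ 0 → DifferentiableAt ℂ (Pd k τ) θ)

lemma step_case (k : ℕ) {s B C : ℝ} (hs : 0 < s) (hs2 : s ≤ 1/2) (hB : 0 < B) (hC : 0 < C)
    (IH : HMInv k s B C) :
    HMInv (k+1) (s/2) ((3*B/(s/2)+B)/(s/2) * Real.exp ((k:ℝ)+1)) C := by
  intro τ hτ hτ1
  obtain ⟨G, hGdiff, hGeven, hGbd, hGeq, _, hPdiff⟩ := IH τ hτ hτ1
  set E := Real.exp ((k:ℝ)+1) with hE
  set M := B * Real.exp (-C/τ) with hM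
  have hM0 : 0 < M := by positivity
  set B' := (3*B/(s/2)+B)/(s/2) * E with hB'
  set K := (3*M/(s/2)+M)/(s/2) with hK
  have hK0 : 0 < K := by positivity
  have hMB' : K * E = B' * Real.exp (-C/τ) := by rw [hB', hK, hM]; ring
  have hball : ball (0:ℂ) (s/2) ⊆ ball (0:ℂ) s := ball_subset_ball (by linarith)
  have h0mem : (0:ℂ) ∈ ball (0:ℂ) (s/2) := mem_ball_self (by linarith)
  -- F = deriv G
  have hGan : AnalyticOnNhd ℂ G (ball (0:ℂ) s) := hGdiff.analyticOnNhd isOpen_ball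
  have hFdiff : DifferentiableOn ℂ (deriv G) (ball (0:ℂ) s) :=
    hGan.deriv.differentiableOn
  set F := deriv G with hF
  -- F is odd
  have hFodd : ∀ θ ∈ ball (0:ℂ) s, F (-θ) = -F θ := by
    intro θ hθ
    have hmem : -θ ∈ ball (0:ℂ) s := by
      rw [mem_ball_zero_iff] at hθ ⊢; simpa using hθ
    have heq : G =ᶠ[𝓝 (-θ)] (fun t => G (-t)) := by
      filter_upwards [isOpen_ball.mem_nhds hmem] with t ht
      exact (hGeven t ht).symm
    rw [hF, heq.deriv_eq, deriv_comp_neg, neg_neg]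
  have hF0 : F 0 = 0 := by
    have := hFodd 0 (hball h0mem)
    rw [neg_zero] at this
    have h2 : F 0 + F 0 = 0 := by linear_combination this
    exact add_self_eq_zero.1 h2
  -- Cauchy-type estimate via Schwarz at each center
  have hFbd : ∀ z ∈ ball (0:ℂ) (s/2), ‖F z‖ ≤ 3*M/(s/2) := by
    intro z hz
    have hzs : z ∈ ball (0:ℂ) s := hball hz
    have hsub : ball z (s/2) ⊆ ball (0:ℂ) s := by
      intro w hw
      rw [mem_ball] at hw hz ⊢
      calc dist w 0 ≤ dist w z + dist z 0 := dist_triangle _ _ _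
        _ < s/2 + s/2 := by linarith
        _ = s := by ring
    have hmaps : Set.MapsTo G (ball z (s/2)) (ball (G z) (3*M)) := by
      intro w hw
      rw [mem_ball, dist_eq_norm]
      have h1 : ‖G w‖ ≤ M := by
        exact hGbd w (hsub hw)
      have h2 : ‖G z‖ ≤ M := by
        exact hGbd z hzs
      calc ‖G w - G z‖ ≤ ‖G w‖ + ‖G z‖ := norm_sub_le _ _
        _ ≤ M + M := add_le_add h1 h2
        _ < 3*M := by linarith
    have := Complex.norm_deriv_le_div_of_mapsTo_ball (hGdiff.mono hsub) (hmaps.mono_right ball_subset_closedBall) (by linarith)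
    exact this
  -- Schwarz lemma : |F z| ≤ K ‖z‖ on ball (0, s/2)
  have hFlin : ∀ z ∈ ball (0:ℂ) (s/2), ‖F z‖ ≤ K * ‖z‖ := by
    intro z hz
    rcases eq_or_ne z 0 with rfl | hz0
    · simp [hF0]
    have hmaps : Set.MapsTo F (ball (0:ℂ) (s/2)) (ball (F 0) (3*M/(s/2) + M)) := by
      intro w hw
      rw [hF0, mem_ball, dist_eq_norm, sub_zero]
      exact lt_of_le_of_lt (hFbd w hw) (by linarith)
    have hds := Complex.norm_dslope_le_div_of_mapsTo_ball
      (hFdiff.mono hball) (hmaps.mono_right ball_subset_closedBall) hz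
    rw [dslope_of_ne _ hz0, slope_def_field, hF0, sub_zero, sub_zero, norm_div] at hds
    have hnz : (0:ℝ) < ‖z‖ := by simpa [norm_pos_iff] using hz0
    calc ‖F z‖ = ‖F z‖ / ‖z‖ * ‖z‖ := (div_mul_cancel₀ _ hnz.ne').symm
      _ ≤ K * ‖z‖ := mul_le_mul_of_nonneg_right (by rw [hK]; exact hds) hnz.le
  -- the new function
  set c : ℂ := (↑(Real.exp ((2 * (k : ℝ) + 1) * τ / 2)) : ℂ) with hc
  have hcabs : ‖c‖ ≤ E := by
    rw [hc, Complex.norm_real, Real.norm_eq_abs, abs_of_pos (Real.exp_pos _), hE, Real.exp_le_exp]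
    have hk0 : (0:ℝ) ≤ (k:ℝ) := Nat.cast_nonneg k
    nlinarith
  set raw : ℂ → ℂ := fun θ => -(c / (2 * (Real.pi:ℂ) * Complex.sin θ)) * F θ with hraw
  -- pointwise bound on raw
  have hrawbd : ∀ θ ∈ ball (0:ℂ) (s/2), θ ≠ 0 → ‖raw θ‖ ≤ K * E := by
    intro θ hθ hθ0
    have hθs : ‖θ‖ < s/2 := by rwa [mem_ball_zero_iff] at hθ
    have hθhalf : ‖θ‖ ≤ 1/2 := by linarith
    have hsin := abs_sin_lower hθhalf
    have hθpos : 0 < ‖θ‖ := by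
      simpa [norm_pos_iff] using hθ0
    have hsinpos : 0 < ‖Complex.sin θ‖ := by linarith
    have hππ : (3:ℝ) ≤ Real.pi := Real.pi_gt_three.le
    have hFl : ‖F θ‖ ≤ K * ‖θ‖ := by
      have := hFlin θ hθ
      simpa using this
    have habs : ‖raw θ‖ =
        ‖c‖ / (2 * Real.pi * ‖Complex.sin θ‖) * ‖F θ‖ := by
      rw [hraw]
      simp only [norm_mul, norm_neg, norm_div, Complex.norm_real, Real.norm_eq_abs, Complex.norm_two]
      rw [abs_of_pos Real.pi_pos]
    rw [habs]
    have hden : 0 < 2 * Real.pi * ‖Complex.sin θ‖ := by positivity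
    calc ‖c‖ / (2 * Real.pi * ‖Complex.sin θ‖) * ‖F θ‖
        ≤ E / (2 * Real.pi * ‖Complex.sin θ‖) * (K * ‖θ‖) := by
          gcongr
      _ ≤ K * E := by
          rw [div_mul_eq_mul_div, div_le_iff₀ hden]
          have h1 : ‖θ‖ ≤ 2 * ‖Complex.sin θ‖ := by linarith
          have hE0 : 0 < E := Real.exp_pos _
          nlinarith [mul_nonneg hE0.le hK0.le, mul_pos hE0 hK0,
            mul_le_mul_of_nonneg_left h1 (mul_pos hE0 hK0).le,
            mul_le_mul_of_nonneg_right hππ (mul_nonneg (mul_pos hE0 hK0).le hsinpos.le)]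
  -- differentiability of raw off 0
  have hopen : IsOpen (ball (0:ℂ) (s/2) \ {0}) := isOpen_ball.sdiff isClosed_singleton
  have hopen' : IsOpen (ball (0:ℂ) s \ {0}) := isOpen_ball.sdiff isClosed_singleton
  have hsinne : ∀ θ : ℂ, θ ∈ ball (0:ℂ) (s/2) → θ ≠ 0 → 2 * (Real.pi:ℂ) * Complex.sin θ ≠ 0 := by
    intro θ hθ hθ0
    have hθs : ‖θ‖ < s/2 := by rwa [mem_ball_zero_iff] at hθ
    apply mul_ne_zero
    · apply mul_ne_zero two_ne_zero
      exact_mod_cast Real.pi_ne_zero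
    · exact sin_ne_zero_small (by linarith) hθ0
  have hcoefdiff : ∀ θ : ℂ, θ ∈ ball (0:ℂ) (s/2) → θ ≠ 0 →
      DifferentiableAt ℂ (fun t => -(c / (2 * (Real.pi:ℂ) * Complex.sin t))) θ := by
    intro θ hθ hθ0
    apply DifferentiableAt.neg
    apply DifferentiableAt.div (differentiableAt_const c)
    · exact (Complex.differentiable_sin θ).const_mul _
    · exact hsinne θ hθ hθ0
  have hrawdiff : DifferentiableOn ℂ raw (ball (0:ℂ) (s/2) \ {0}) := by
    intro z hz
    obtain ⟨hz1, hz2⟩ := hz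
    have hz0 : z ≠ 0 := by simpa using hz2
    apply DifferentiableAt.differentiableWithinAt
    exact (hcoefdiff z hz1 hz0).mul ((hFdiff.differentiableAt (isOpen_ball.mem_nhds (hball hz1))))
  -- the extension
  set L := limUnder (𝓝[≠] (0:ℂ)) raw with hL
  set G' : ℂ → ℂ := Function.update raw 0 L with hG'
  have hG'diff : DifferentiableOn ℂ G' (ball (0:ℂ) (s/2)) := by
    apply Complex.differentiableOn_update_limUnder_of_bddAbove
      (isOpen_ball.mem_nhds h0mem) hrawdiff
    refine ⟨K * E, ?_⟩
    rintro x ⟨w, ⟨hw1, hw2⟩, rfl⟩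
    have hw0 : w ≠ 0 := by simpa using hw2
    simpa using hrawbd w hw1 hw0
  have hG'raw : ∀ θ : ℂ, θ ≠ 0 → G' θ = raw θ := by
    intro θ hθ0
    rw [hG', Function.update_of_ne hθ0]
  -- G' even on ball
  have hG'even : ∀ θ ∈ ball (0:ℂ) (s/2), G' (-θ) = G' θ := by
    intro θ hθ
    rcases eq_or_ne θ 0 with rfl | hθ0
    · rw [neg_zero]
    · rw [hG'raw _ (neg_ne_zero.2 hθ0), hG'raw _ hθ0, hraw]
      simp only
      rw [Complex.sin_neg, hFodd θ (hball hθ)]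
      rw [show (2 * (Real.pi:ℂ) * -Complex.sin θ) = -(2 * (Real.pi:ℂ) * Complex.sin θ) by ring,
        div_neg]
      ring
  -- G' bound on ball
  have hG'bd : ∀ θ ∈ ball (0:ℂ) (s/2), ‖G' θ‖ ≤ K * E := by
    intro θ hθ
    rcases eq_or_ne θ 0 with rfl | hθ0
    · -- limit argument
      have hcont : ContinuousAt G' 0 :=
        (hG'diff.differentiableAt (isOpen_ball.mem_nhds h0mem)).continuousAt
      have htend : Tendsto (fun t => ‖G' t‖) (𝓝[≠] (0:ℂ)) (𝓝 (‖G' 0‖)) :=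
        ((continuous_norm.continuousAt).comp hcont).tendsto.mono_left nhdsWithin_le_nhds
      apply le_of_tendsto htend
      have hmem : ball (0:ℂ) (s/2) ∈ 𝓝[≠] (0:ℂ) :=
        nhdsWithin_le_nhds (isOpen_ball.mem_nhds h0mem)
      filter_upwards [hmem, self_mem_nhdsWithin] with t ht ht0
      rw [hG'raw t ht0]
      exact hrawbd t ht ht0
    · rw [hG'raw _ hθ0]
      exact hrawbd θ hθ hθ0
  -- Pd k analytic off 0
  have hPdOn : DifferentiableOn ℂ (Pd k τ) (ball (0:ℂ) s \ {0}) := fun z hz =>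
    (hPdiff z hz.1 (by simpa using hz.2)).differentiableWithinAt
  have hPan : AnalyticOnNhd ℂ (Pd k τ) (ball (0:ℂ) s \ {0}) := hPdOn.analyticOnNhd hopen'
  have hPderivdiff : ∀ θ ∈ ball (0:ℂ) (s/2), θ ≠ 0 → DifferentiableAt ℂ (deriv (Pd k τ)) θ := by
    intro θ hθ hθ0
    exact (hPan.deriv θ ⟨hball hθ, by simpa using hθ0⟩).differentiableAt
  -- identity for k+1
  have hident : ∀ θ ∈ ball (0:ℂ) (s/2), θ ≠ 0 → rhoS (k+1) τ θ - Pd (k+1) τ θ = G' θ := by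
    intro θ hθ hθ0
    have hGdAt : DifferentiableAt ℂ G θ := hGdiff.differentiableAt (isOpen_ball.mem_nhds (hball hθ))
    have hPdAt : DifferentiableAt ℂ (Pd k τ) θ := hPdiff θ (hball hθ) hθ0
    have hev : rhoS k τ =ᶠ[𝓝 θ] fun t => Pd k τ t + G t := by
      filter_upwards [hopen'.mem_nhds ⟨hball hθ, by simpa using hθ0⟩] with t ht
      have := hGeq t ht.1 (by simpa using ht.2)
      linear_combination this
    have hder : deriv (rhoS k τ) θ = deriv (Pd k τ) θ + F θ := by
      rw [hev.deriv_eq]; exact deriv_add hPdAt hGdAt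
    rw [hG'raw _ hθ0]
    show -((↑(Real.exp ((2 * (k : ℝ) + 1) * τ / 2)) : ℂ) / (2 * (Real.pi : ℂ) * Complex.sin θ)) *
        deriv (rhoS k τ) θ - (-((↑(Real.exp ((2 * (k : ℝ) + 1) * τ / 2)) : ℂ) /
        (2 * (Real.pi : ℂ) * Complex.sin θ)) * deriv (Pd k τ) θ) = raw θ
    rw [hder, hraw]
    simp only [← hc]
    ring
  have hzero : rhoS (k+1) τ 0 - Pd (k+1) τ 0 = 0 := by
    show -((↑(Real.exp ((2 * (k : ℝ) + 1) * τ / 2)) : ℂ) / (2 * (Real.pi : ℂ) * Complex.sin 0)) *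
        deriv (rhoS k τ) 0 - (-((↑(Real.exp ((2 * (k : ℝ) + 1) * τ / 2)) : ℂ) /
        (2 * (Real.pi : ℂ) * Complex.sin 0)) * deriv (Pd k τ) 0) = 0
    rw [Complex.sin_zero]
    simp
  have hPd1diff : ∀ θ ∈ ball (0:ℂ) (s/2), θ ≠ 0 → DifferentiableAt ℂ (Pd (k+1) τ) θ := by
    intro θ hθ hθ0
    have : Pd (k+1) τ = fun t => -((↑(Real.exp ((2 * (k : ℝ) + 1) * τ / 2)) : ℂ) /
        (2 * (Real.pi : ℂ) * Complex.sin t)) * deriv (Pd k τ) t := rfl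
    rw [this, hc] at *
    exact (hcoefdiff θ hθ hθ0).mul (hPderivdiff θ hθ hθ0)
  refine ⟨G', hG'diff, hG'even, ?_, hident, ?_, hPd1diff⟩
  · intro θ hθ
    rw [← hMB']
    exact hG'bd θ hθ
  · rw [hzero]
    rw [norm_zero, ← hMB']
    positivity


lemma invariant (k : ℕ) : ∃ s B C : ℝ, 0 < s ∧ s ≤ 1/2 ∧ 0 < B ∧ 0 < C ∧ HMInv k s B C := by
  induction k with
  | zero =>
    refine ⟨1/2, 2*W+2, 13, by norm_num, le_refl _, by linarith [W_nonneg], by norm_num, ?_⟩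
    intro τ hτ hτ1
    obtain ⟨G, h1, h2, h3, h4, h5⟩ := base_case hτ hτ1
    exact ⟨G, h1, h2, h3, fun θ hθ _ => h4 θ hθ,
      by rw [h4 0 (mem_ball_self (by norm_num))]; exact h3 0 (mem_ball_self (by norm_num)),
      fun θ hθ _ => h5 θ⟩
  | succ k ih =>
    obtain ⟨s, B, C, hs, hs2, hB, hC, hInv⟩ := ih
    exact ⟨s/2, (3*B/(s/2)+B)/(s/2) * Real.exp ((k:ℝ)+1), C, by linarith, by linarith,
      by positivity, hC, step_case k hs hs2 hB hC hInv⟩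

/-- Lemma 3 of Hall–Mitchell. For every odd dimension `d = 2k+1`
there are positive constants `s_d, B_d, C_d` such that the remainder
`R_d(τ,θ) = ρ_τ^d(θ) − P_d(τ,θ)` satisfies `|R_d(τ,θ)| ≤ B_d e^{−C_d/τ}` for all
`|θ| < s_d` and all `0 < τ < 1`. -/
theorem remainder_exponentially_small (k : ℕ) :
    ∃ s B C : ℝ, 0 < s ∧ 0 < B ∧ 0 < C ∧
      ∀ τ : ℝ, 0 < τ → τ < 1 →
        ∀ θ : ℂ, ‖θ‖ < s →
          ‖rhoS k τ θ - Pd k τ θ‖ ≤ B * Real.exp (-C / τ) := by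
  obtain ⟨s, B, C, hs, hs2, hB, hC, hInv⟩ := invariant k
  refine ⟨s, B, C, hs, hB, hC, ?_⟩
  intro τ hτ hτ1 θ hθ
  obtain ⟨G, h1, h2, h3, h4, h5, h6⟩ := hInv τ hτ hτ1
  rcases eq_or_ne θ 0 with rfl | hθ0
  · exact h5
  · have hmem : θ ∈ ball (0:ℂ) s := by rwa [mem_ball_zero_iff]
    rw [h4 θ hmem hθ0]
    exact h3 θ hmem
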